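/- Let G be a strongly connected directed graph with all distances between distinct vertices at most 2, and let V1, V2 ⊆ V(G) be disjoint sets with (x,y) ∈ E(G) for every x ∈ V1, y ∈ V2 and (y,x) ∉ E(G) for every y ∈ V2, x ∈ V1. Let R1 ⊆ V1 and R2 ⊆ V2 be nonempty. If there is a 1-vertex u1 ∈ V1 \ R1 w.r.t. R1 and a 2-vertex u2 ∈ V2 \ R2 w.r.t. R2, then no vertex of R1 ∪ R2 resolves u1 and u2, so R1 ∪ R2 does not resolve V1 ∪ V2 in G. -/
import Mathlib


universe u

/-- There is a directed walk of length `n` from `u` to `v` in the digraph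
with edge relation `E`. -/
def HasWalkLen {V : Type u} (E : V → V → Prop) (u v : V) (n : ℕ) : Prop :=
  ∃ f : Fin (n + 1) → V, f 0 = u ∧ f (Fin.last n) = v ∧
    ∀ i : Fin n, E (f i.castSucc) (f i.succ)

/-- `v` is reachable from `u` by a directed walk. -/
def Reaches {V : Type u} (E : V → V → Prop) (u v : V) : Prop :=
  ∃ n, HasWalkLen E u v n

/-- Directed distance from `u` to `v` (length of a shortest directed path);
a junk value (`sInf ∅ = 0`) if `v` is unreachable from `u`. -/
noncomputable def ddist {V : Type u} (E : V → V → Prop) (u v : V) : ℕ :=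
  sInf {n | HasWalkLen E u v n}

/-- `w` resolves the vertices `u` and `v`: `w = u`, or `w = v`, or both
distances from `w` are defined (reachable) and different. -/
def Resolves {V : Type u} (E : V → V → Prop) (w u v : V) : Prop :=
  w = u ∨ w = v ∨
    (Reaches E w u ∧ Reaches E w v ∧ ddist E w u ≠ ddist E w v)

/-- `R` resolves the vertex set `U`: every pair of distinct vertices of `U`
is resolved by some member of `R`. -/
def ResolvesSet {V : Type u} (E : V → V → Prop) (R U : Set V) : Prop :=
  ∀ u ∈ U, ∀ v ∈ U, u ≠ v → ∃ w ∈ R, Resolves E w u v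

/-- The digraph is strongly connected on the vertex set `S`. -/
def SConn {V : Type u} (E : V → V → Prop) (S : Set V) : Prop :=
  ∀ u ∈ S, ∀ v ∈ S, Reaches E u v

/-- `u` is a 1-vertex w.r.t. `R`: `u ∉ R` and every `w ∈ R` has an edge to `u`. -/
def OneVertex {V : Type u} (E : V → V → Prop) (R : Set V) (u : V) : Prop :=
  u ∉ R ∧ ∀ w ∈ R, E w u

/-- `u` is a 2-vertex w.r.t. `R`: `u ∉ R` and no `w ∈ R` has an edge to `u`. -/
def TwoVertex {V : Type u} (E : V → V → Prop) (R : Set V) (u : V) : Prop :=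
  u ∉ R ∧ ∀ w ∈ R, ¬ E w u

/-- Directed co-graphs with vertex set `S` and edge relation `E`, built
inductively from single vertices by disjoint union, join and directed join. -/
inductive IsDicograph {V : Type u} : Set V → (V → V → Prop) → Prop
  | single (v : V) : IsDicograph {v} fun _ _ => False
  | disjUnion {S₁ S₂ : Set V} {E₁ E₂ : V → V → Prop} :
      IsDicograph S₁ E₁ → IsDicograph S₂ E₂ → Disjoint S₁ S₂ →
      IsDicograph (S₁ ∪ S₂) fun u v => E₁ u v ∨ E₂ u v
  | join {S₁ S₂ : Set V} {E₁ E₂ : V → V → Prop} :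
      IsDicograph S₁ E₁ → IsDicograph S₂ E₂ → Disjoint S₁ S₂ →
      IsDicograph (S₁ ∪ S₂) fun u v =>
        E₁ u v ∨ E₂ u v ∨ (u ∈ S₁ ∧ v ∈ S₂) ∨ (u ∈ S₂ ∧ v ∈ S₁)
  | dirJoin {S₁ S₂ : Set V} {E₁ E₂ : V → V → Prop} :
      IsDicograph S₁ E₁ → IsDicograph S₂ E₂ → Disjoint S₁ S₂ →
      IsDicograph (S₁ ∪ S₂) fun u v => E₁ u v ∨ E₂ u v ∨ (u ∈ S₁ ∧ v ∈ S₂)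

lemma hasWalkLen_zero {V : Type u} {E : V → V → Prop} {u v : V} :
    HasWalkLen E u v 0 ↔ u = v := by
  constructor
  · rintro ⟨f, h0, hl, _⟩
    rw [← h0, ← hl]; rfl
  · rintro rfl
    exact ⟨fun _ => u, rfl, rfl, fun i => i.elim0⟩

lemma hasWalkLen_one {V : Type u} {E : V → V → Prop} {u v : V} :
    HasWalkLen E u v 1 ↔ E u v := by
  constructor
  · rintro ⟨f, h0, hl, he⟩
    have := he 0
    rw [show (Fin.castSucc (0 : Fin 1)) = (0 : Fin 2) from rfl,
      show (Fin.succ (0 : Fin 1)) = Fin.last 1 from rfl, h0, hl] at this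
    exact this
  · intro h
    refine ⟨![u, v], rfl, rfl, fun i => ?_⟩
    have : i = 0 := Subsingleton.elim _ _
    subst this
    exact h

lemma ddist_le_one {V : Type u} {E : V → V → Prop} {u v : V} (h : E u v) :
    ddist E u v ≤ 1 :=
  Nat.sInf_le (hasWalkLen_one.mpr h)

lemma ddist_eq_one {V : Type u} {E : V → V → Prop} {u v : V}
    (hne : u ≠ v) (hE : E u v) : ddist E u v = 1 := by
  have hle : ddist E u v ≤ 1 := ddist_le_one hE
  have hmem := Nat.sInf_mem (⟨1, hasWalkLen_one.mpr hE⟩ :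
    {n | HasWalkLen E u v n}.Nonempty)
  have h0 : ddist E u v ≠ 0 := by
    intro h
    rw [show sInf {n | HasWalkLen E u v n} = ddist E u v from rfl, h] at hmem
    exact hne (hasWalkLen_zero.mp hmem)
  omega

lemma ddist_eq_two {V : Type u} {E : V → V → Prop} {u v : V}
    (hr : Reaches E u v) (hne : u ≠ v) (hE : ¬ E u v)
    (hle : ddist E u v ≤ 2) : ddist E u v = 2 := by
  obtain ⟨n, hn⟩ := hr
  have hne' : {n | HasWalkLen E u v n}.Nonempty := ⟨n, hn⟩
  have hmem := Nat.sInf_mem hne'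
  have hmem' : HasWalkLen E u v (ddist E u v) := hmem
  rcases h0 : ddist E u v with _ | _ | k
  · exact absurd (hasWalkLen_zero.mp (h0 ▸ hmem')) hne
  · rw [h0] at hmem'
    exact absurd (hasWalkLen_one.mp hmem') hE
  · omega

/-- Directed join case, negative direction: a 1-vertex on the left and a
2-vertex on the right are unresolved by `R₁ ∪ R₂`. -/
theorem stmt_8 {V : Type u} {E : V → V → Prop}
    (hsc : SConn E Set.univ)
    (hdiam : ∀ u v : V, u ≠ v → ddist E u v ≤ 2)
    {V₁ V₂ R₁ R₂ : Set V}
    (hdisj : Disjoint V₁ V₂)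
    (hforward : ∀ x ∈ V₁, ∀ y ∈ V₂, E x y)
    (hback : ∀ y ∈ V₂, ∀ x ∈ V₁, ¬ E y x)
    (hR₁ : R₁ ⊆ V₁) (hR₂ : R₂ ⊆ V₂)
    (hR₁ne : R₁.Nonempty) (hR₂ne : R₂.Nonempty)
    {u₁ u₂ : V} (hu₁ : u₁ ∈ V₁) (hu₁R : u₁ ∉ R₁) (h1v : OneVertex E R₁ u₁)
    (hu₂ : u₂ ∈ V₂) (hu₂R : u₂ ∉ R₂) (h2v : TwoVertex E R₂ u₂) :
    (∀ w ∈ R₁ ∪ R₂, ¬ Resolves E w u₁ u₂) ∧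
    ¬ ResolvesSet E (R₁ ∪ R₂) (V₁ ∪ V₂) := by
  have hne12 : u₁ ≠ u₂ := fun h => hdisj.ne_of_mem hu₁ hu₂ h
  have key : ∀ w ∈ R₁ ∪ R₂, ¬ Resolves E w u₁ u₂ := by
    rintro w (hw | hw)
    · -- w ∈ R₁ : both distances equal 1
      have hw1 : w ∈ V₁ := hR₁ hw
      have hne1 : w ≠ u₁ := fun h => hu₁R (h ▸ hw)
      have hne2 : w ≠ u₂ := fun h => hdisj.ne_of_mem hw1 hu₂ h
      have hE1 : E w u₁ := h1v.2 w hw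
      have hE2 : E w u₂ := hforward w hw1 u₂ hu₂
      have hd1 : ddist E w u₁ = 1 := ddist_eq_one hne1 hE1
      have hd2 : ddist E w u₂ = 1 := ddist_eq_one hne2 hE2
      rintro (h | h | ⟨_, _, hd⟩)
      · exact hne1 h
      · exact hne2 h
      · exact hd (hd1.trans hd2.symm)
    · -- w ∈ R₂ : both distances equal 2
      have hw2 : w ∈ V₂ := hR₂ hw
      have hne1 : w ≠ u₁ := fun h => hdisj.ne_of_mem hu₁ hw2 h.symm
      have hne2 : w ≠ u₂ := fun h => hu₂R (h ▸ hw)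
      have hE1 : ¬ E w u₁ := hback w hw2 u₁ hu₁
      have hE2 : ¬ E w u₂ := h2v.2 w hw
      have hd1 : ddist E w u₁ = 2 :=
        ddist_eq_two (hsc w trivial u₁ trivial) hne1 hE1 (hdiam w u₁ hne1)
      have hd2 : ddist E w u₂ = 2 :=
        ddist_eq_two (hsc w trivial u₂ trivial) hne2 hE2 (hdiam w u₂ hne2)
      rintro (h | h | ⟨_, _, hd⟩)
      · exact hne1 h
      · exact hne2 h
      · exact hd (hd1.trans hd2.symm)
  refine ⟨key, fun hres => ?_⟩
  obtain ⟨w, hw, hres'⟩ := hres u₁ (Or.inl hu₁) u₂ (Or.inr hu₂) hne12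
  exact key w hw hres'
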